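/- In the augmented graph G' built from a strongly connected directed graph G, let C* be a minimum-capacity (s,t)-edge-cut. If G contains a separation triple (L,S,R) with x ∈ L, |S| ≤ k, and vol^out_G(L) ≤ ν, then the capacity of C* is at most ν/ε + ν. -/

import Mathlib

open Finset ENNReal

inductive AugV (V : Type) where
  | s : AugV V
  | t : AugV V
  | inV : V → AugV V
  | outV : V → AugV V
deriving DecidableEq

variable {V : Type} [Fintype V] [DecidableEq V]

/-- The out-degree of `v` in the directed graph with edge set `E`. -/
def outDeg (E : Finset (V × V)) (v : V) : ℕ :=
  (Finset.univ.filter fun w => (v, w) ∈ E).card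

/-- The capacities of the augmented graph `G'` built from the directed graph
`G = (V,E)` with seed vertex `x` and parameters `ν, k, ε`:
edges `(v_in, v_out)` of capacity `ν/(εk)` for `v ≠ x`, edges `(v_out, w_in)`
of capacity `∞` for `(v,w) ∈ E` (there is no `x_in`), edges `(v_out, t)` of
capacity `deg^out(v)`, and the edge `(s, x_out)` of capacity `ν/ε + ν + 1`. -/
noncomputable def augCap (E : Finset (V × V)) (x : V) (ν k : ℕ) (ε : ℝ) :
    AugV V → AugV V → ℝ≥0∞
  | AugV.inV v, AugV.outV w =>
      if v = w ∧ v ≠ x then ENNReal.ofReal ((ν : ℝ) / (ε * k)) else 0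
  | AugV.outV v, AugV.inV w => if (v, w) ∈ E ∧ w ≠ x then ⊤ else 0
  | AugV.outV v, AugV.t => (outDeg E v : ℝ≥0∞)
  | AugV.s, AugV.outV v =>
      if v = x then ENNReal.ofReal ((ν : ℝ) / ε + (ν : ℝ) + 1) else 0
  | _, _ => 0

/-- The capacity of a set of edges `C` of the augmented graph. -/
noncomputable def cutCap (c : AugV V → AugV V → ℝ≥0∞)
    (C : Finset (AugV V × AugV V)) : ℝ≥0∞ :=
  ∑ e ∈ C, c e.1 e.2

/-- `C` is an `(s,t)`-edge-cut: after removing the edges of `C`, there is no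
path from `s` to `t` along edges of positive capacity. -/
def IsSTCut (c : AugV V → AugV V → ℝ≥0∞) (C : Finset (AugV V × AugV V)) : Prop :=
  ¬ Relation.ReflTransGen (fun a b => c a b ≠ 0 ∧ (a, b) ∉ C) AugV.s AugV.t

/-- If the strongly connected directed graph `G` has a separation triple
`(L,S,R)` with `x ∈ L`, `|S| ≤ k` and `vol^out(L) ≤ ν`, then the minimum
capacity of an `(s,t)`-edge-cut of the augmented graph `G'` is at most
`ν/ε + ν`. -/
theorem stmt14 (E : Finset (V × V)) (x : V) (ν k : ℕ) (ε : ℝ)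
    (hν : 0 < ν) (hk : 0 < k) (hε : 0 < ε)
    (hstrong : ∀ u v : V, Relation.ReflTransGen (fun a b => (a, b) ∈ E) u v)
    (L S R : Finset V)
    (hcover : ∀ v : V, v ∈ L ∨ v ∈ S ∨ v ∈ R)
    (hLS : Disjoint L S) (hLR : Disjoint L R) (hSR : Disjoint S R)
    (hL : L.Nonempty) (hR : R.Nonempty)
    (hnoLR : ∀ e ∈ E, ¬(e.1 ∈ L ∧ e.2 ∈ R))
    (hx : x ∈ L) (hSk : S.card ≤ k)
    (hvol : (∑ v ∈ L, outDeg E v) ≤ ν) :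
    sInf {r : ℝ≥0∞ | ∃ C : Finset (AugV V × AugV V),
        IsSTCut (augCap E x ν k ε) C ∧ cutCap (augCap E x ν k ε) C = r} ≤
      ENNReal.ofReal ((ν : ℝ) / ε + (ν : ℝ)) := by

  classical
  set c := augCap E x ν k ε with hc
  set C : Finset (AugV V × AugV V) :=
    S.image (fun v => (AugV.inV v, AugV.outV v)) ∪
    L.image (fun v => (AugV.outV v, AugV.t)) with hCdef
  have hmemC : ∀ a b : AugV V, (a, b) ∈ C ↔
      (∃ v ∈ S, (AugV.inV v : AugV V) = a ∧ (AugV.outV v : AugV V) = b) ∨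
      (∃ v ∈ L, (AugV.outV v : AugV V) = a ∧ (AugV.t : AugV V) = b) := by
    intro a b
    simp [hCdef, Finset.mem_union, Finset.mem_image, Prod.ext_iff]
  have hxS : x ∉ S := fun h => Finset.disjoint_left.mp hLS hx h
  have hcut : IsSTCut c C := by
    intro hpath
    have key : ∀ a : AugV V,
        Relation.ReflTransGen (fun a b => c a b ≠ 0 ∧ (a, b) ∉ C) AugV.s a →
        (a = AugV.s ∨ (∃ v ∈ L, a = AugV.outV v) ∨
          (∃ w, (w ∈ L ∨ w ∈ S) ∧ a = AugV.inV w)) := by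
      intro a h
      induction h with
      | refl => exact Or.inl rfl
      | @tail b a hsb hedge ih =>
        obtain ⟨hcap, hnC⟩ := hedge
        rcases ih with hb | ⟨v, hvL, hb⟩ | ⟨w, hw, hb⟩
        · subst hb
          cases a with
          | s => simp [hc, augCap] at hcap
          | t => simp [hc, augCap] at hcap
          | inV u => simp [hc, augCap] at hcap
          | outV u =>
            simp only [hc, augCap] at hcap
            by_cases hux : u = x
            · subst hux; exact Or.inr (Or.inl ⟨u, hx, rfl⟩)
            · simp [hux] at hcap
        · subst hb
          cases a with
          | s => simp [hc, augCap] at hcap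
          | t =>
            exact (hnC ((hmemC _ _).mpr (Or.inr ⟨v, hvL, rfl, rfl⟩))).elim
          | inV u =>
            simp only [hc, augCap, ne_eq, ite_eq_right_iff, not_forall] at hcap
            obtain ⟨⟨hvu, hux⟩, -⟩ := hcap
            refine Or.inr (Or.inr ⟨u, ?_, rfl⟩)
            rcases hcover u with h | h | h
            · exact Or.inl h
            · exact Or.inr h
            · exact absurd ⟨hvL, h⟩ (hnoLR (v, u) hvu)
          | outV u => simp [hc, augCap] at hcap
        · subst hb
          cases a with
          | s => simp [hc, augCap] at hcap
          | t => simp [hc, augCap] at hcap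
          | inV u => simp [hc, augCap] at hcap
          | outV u =>
            simp only [hc, augCap, ne_eq, ite_eq_right_iff, not_forall] at hcap
            obtain ⟨⟨hwu, hwx⟩, -⟩ := hcap
            subst hwu
            have hwS : w ∉ S := fun hS =>
              hnC ((hmemC _ _).mpr (Or.inl ⟨w, hS, rfl, rfl⟩))
            rcases hw with h | h
            · exact Or.inr (Or.inl ⟨w, h, rfl⟩)
            · exact absurd h hwS
    rcases key AugV.t hpath with h | ⟨v, _, h⟩ | ⟨w, _, h⟩ <;> simp at h
  have hdisj : Disjoint (S.image fun v => ((AugV.inV v : AugV V), (AugV.outV v : AugV V)))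
      (L.image fun v => ((AugV.outV v : AugV V), (AugV.t : AugV V))) := by
    rw [Finset.disjoint_left]
    rintro ⟨a, b⟩ h1 h2
    simp [Finset.mem_image, Prod.ext_iff] at h1 h2
    obtain ⟨v, _, hv1, _⟩ := h1
    obtain ⟨u, _, hu1, _⟩ := h2
    rw [← hv1] at hu1
    cases hu1
  have hinj1 : ∀ a ∈ S, ∀ b ∈ S,
      ((AugV.inV a : AugV V), (AugV.outV a : AugV V)) = (AugV.inV b, AugV.outV b) → a = b := by
    intro a _ b _ h
    simpa using h
  have hinj2 : ∀ a ∈ L, ∀ b ∈ L,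
      ((AugV.outV a : AugV V), (AugV.t : AugV V)) = (AugV.outV b, AugV.t) → a = b := by
    intro a _ b _ h
    simpa using h
  have hεk : ε * k ≠ 0 := by positivity
  have hcapval : cutCap c C ≤ ENNReal.ofReal ((ν : ℝ) / ε + (ν : ℝ)) := by
    rw [cutCap, hCdef, Finset.sum_union hdisj, Finset.sum_image hinj1,
      Finset.sum_image hinj2]
    have h1 : ∑ v ∈ S, c (AugV.inV v) (AugV.outV v)
        = S.card • ENNReal.ofReal ((ν : ℝ) / (ε * k)) := by
      rw [← Finset.sum_const]
      refine Finset.sum_congr rfl fun v hv => ?_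
      have hvx : v ≠ x := fun h => hxS (h ▸ hv)
      simp [hc, augCap, hvx]
    have h2 : ∑ v ∈ L, c (AugV.outV v) AugV.t = ((∑ v ∈ L, outDeg E v : ℕ) : ℝ≥0∞) := by
      push_cast
      exact Finset.sum_congr rfl fun v _ => rfl
    rw [h1, h2]
    have hb1 : S.card • ENNReal.ofReal ((ν : ℝ) / (ε * k)) ≤ ENNReal.ofReal ((ν : ℝ) / ε) := by
      rw [nsmul_eq_mul]
      calc (S.card : ℝ≥0∞) * ENNReal.ofReal ((ν : ℝ) / (ε * k))
          ≤ (k : ℝ≥0∞) * ENNReal.ofReal ((ν : ℝ) / (ε * k)) := by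
            gcongr
            all_goals first | exact le_top | exact_mod_cast hSk
        _ = ENNReal.ofReal ((k : ℝ) * ((ν : ℝ) / (ε * k))) := by
            rw [ENNReal.ofReal_mul (by positivity), ENNReal.ofReal_natCast]
        _ = ENNReal.ofReal ((ν : ℝ) / ε) := by
            congr 1
            field_simp
    have hb2 : ((∑ v ∈ L, outDeg E v : ℕ) : ℝ≥0∞) ≤ ENNReal.ofReal (ν : ℝ) := by
      rw [ENNReal.ofReal_natCast]
      exact_mod_cast hvol
    calc S.card • ENNReal.ofReal ((ν : ℝ) / (ε * k))
          + ((∑ v ∈ L, outDeg E v : ℕ) : ℝ≥0∞)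
        ≤ ENNReal.ofReal ((ν : ℝ) / ε) + ENNReal.ofReal (ν : ℝ) := add_le_add hb1 hb2
      _ = ENNReal.ofReal ((ν : ℝ) / ε + (ν : ℝ)) := by
          rw [← ENNReal.ofReal_add (by positivity) (by positivity)]
  exact le_trans (sInf_le ⟨C, hcut, rfl⟩) hcapval
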